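/- If the fundamental tensor F satisfies the defining condition of any one of the basic classes F₁, F₂, F₄, F₅, F₆, F₈, F₉, F₁₀, F₁₁ listed in the context, then its Nijenhuis tensor satisfies N(φx, φy, z) = 0 for all x, y, z ∈ V; consequently any finite sum of fundamental tensors, each satisfying one of these nine conditions, has Nijenhuis tensor vanishing on (φ·, φ·, ·). -/
import Mathlib


open scoped RealInnerProductSpace

noncomputable section

variable {V : Type*} [NormedAddCommGroup V] [InnerProductSpace ℝ V]

/-- A Riemannian Π-structure on a real inner product space `V`:
a linear map `phi`, a vector `xi` (with dual form `η x = ⟪x, xi⟫`) satisfying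
the defining algebraic identities. -/
structure PiStruct (V : Type*) [NormedAddCommGroup V] [InnerProductSpace ℝ V] where
  phi : V →ₗ[ℝ] V
  xi : V
  phi_xi : phi xi = 0
  phi_phi : ∀ x : V, phi (phi x) = x - (⟪x, xi⟫ : ℝ) • xi
  eta_phi : ∀ x : V, ⟪phi x, xi⟫ = 0
  eta_xi : ⟪xi, xi⟫ = (1 : ℝ)
  g_phi_phi : ∀ x y : V, ⟪phi x, phi y⟫ = ⟪x, y⟫ - ⟪x, xi⟫ * ⟪y, xi⟫
  g_phi_symm : ∀ x y : V, ⟪phi x, y⟫ = ⟪x, phi y⟫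

/-- Trilinear real-valued maps on `V`. -/
abbrev Tri (V : Type*) [NormedAddCommGroup V] [InnerProductSpace ℝ V] :=
  V →ₗ[ℝ] V →ₗ[ℝ] V →ₗ[ℝ] ℝ

/-- The 1-form `η(x) = g(x, ξ)`. -/
def PiStruct.eta (P : PiStruct V) (x : V) : ℝ := ⟪x, P.xi⟫

/-- `F` is a fundamental tensor for the Π-structure `P`. -/
def IsFund (P : PiStruct V) (F : Tri V) : Prop :=
  (∀ x y z : V, F x y z = F x z y) ∧
  (∀ x y z : V, F x y z =
    -F x (P.phi y) (P.phi z) + P.eta y * F x P.xi z + P.eta z * F x y P.xi)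

/-- The Nijenhuis tensor of `F`. -/
def Nij (P : PiStruct V) (F : Tri V) (x y z : V) : ℝ :=
  F (P.phi x) y z - F (P.phi y) x z - F x y (P.phi z) + F y x (P.phi z)
    + P.eta z * (F x (P.phi y) P.xi - F y (P.phi x) P.xi)

/-- The potential of the first natural connection. -/
def Q1 (P : PiStruct V) (F : Tri V) (x y z : V) : ℝ :=
  -(1/2) * F x (P.phi y) z - (1/2) * P.eta z * F x (P.phi y) P.xi
    + P.eta y * F x (P.phi z) P.xi

/-- The potential of the second natural connection. -/
def Q2 (P : PiStruct V) (F : Tri V) (x y z : V) : ℝ :=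
  Q1 P F x y z - (1/8) * (Nij P F (P.phi (P.phi z)) (P.phi (P.phi y)) (P.phi (P.phi x))
    + 2 * P.eta x * Nij P F (P.phi z) (P.phi y) P.xi)

/-- The torsion tensor of the first natural connection. -/
def T1 (P : PiStruct V) (F : Tri V) (x y z : V) : ℝ :=
  -(1/2) * (F x (P.phi y) z - F y (P.phi x) z)
    - (1/2) * P.eta z * (F x (P.phi y) P.xi - F y (P.phi x) P.xi)
    + P.eta y * F x (P.phi z) P.xi - P.eta x * F y (P.phi z) P.xi

/-- The torsion tensor of the second natural connection. -/
def T2 (P : PiStruct V) (F : Tri V) (x y z : V) : ℝ :=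
  Q2 P F x y z - Q2 P F y x z

/-- Identity (*) for a torsion-like tensor `T`. -/
def StarId (P : PiStruct V) (T : V → V → V → ℝ) : Prop :=
  ∀ x y z : V,
    T x y z + T y z x + T (P.phi x) y (P.phi z) + T y (P.phi z) (P.phi x)
    - P.eta x * (T P.xi y z + T y z P.xi - P.eta y * T P.xi z P.xi)
    - P.eta y * (T x P.xi z + T P.xi z x + T (P.phi x) P.xi (P.phi z)
        + T P.xi (P.phi z) (P.phi x))
    - P.eta z * (T x y P.xi + T y P.xi x - P.eta y * T x P.xi P.xi) = 0

/-- The Lee form `θ(z) = Σᵢ F(eᵢ, eᵢ, z)` with respect to a family `e`. -/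
def theta (F : Tri V) {m : ℕ} (e : Fin m → V) (z : V) : ℝ := ∑ i, F (e i) (e i) z

/-- The Lee form `θ*(z) = Σᵢ F(eᵢ, φeᵢ, z)` with respect to a family `e`. -/
def thetaS (P : PiStruct V) (F : Tri V) {m : ℕ} (e : Fin m → V) (z : V) : ℝ :=
  ∑ i, F (e i) (P.phi (e i)) z

/-- The Lee form `ω(z) = F(ξ, ξ, z)`. -/
def omg (P : PiStruct V) (F : Tri V) (z : V) : ℝ := F P.xi P.xi z

/-- `F` satisfies the defining condition of one of the nine basic classes
F₁, F₂, F₄, F₅, F₆, F₈, F₉, F₁₀, F₁₁. -/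
def NineClass (P : PiStruct V) (F : Tri V) {m : ℕ} (e : Fin m → V) (n : ℕ) : Prop :=
  -- F₁
  (∀ x y z : V, F x y z = (1 / (2 * (n : ℝ))) *
      (⟪P.phi x, P.phi y⟫ * theta F e (P.phi (P.phi z))
        + ⟪P.phi x, P.phi z⟫ * theta F e (P.phi (P.phi y))
        - ⟪x, P.phi y⟫ * theta F e (P.phi z)
        - ⟪x, P.phi z⟫ * theta F e (P.phi y)))
  ∨ -- F₂
  ((∀ y z : V, F P.xi y z = 0) ∧ (∀ x z : V, F x P.xi z = 0) ∧
    (∀ z : V, theta F e z = 0) ∧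
    (∀ x y z : V, F x y (P.phi z) + F y z (P.phi x) + F z x (P.phi y) = 0))
  ∨ -- F₄
  (∀ x y z : V, F x y z = (theta F e P.xi / (2 * (n : ℝ))) *
      (⟪P.phi x, P.phi y⟫ * P.eta z + ⟪P.phi x, P.phi z⟫ * P.eta y))
  ∨ -- F₅
  (∀ x y z : V, F x y z = (thetaS P F e P.xi / (2 * (n : ℝ))) *
      (⟪x, P.phi y⟫ * P.eta z + ⟪x, P.phi z⟫ * P.eta y))
  ∨ -- F₆
  ((∀ x y z : V, F x y z = F x y P.xi * P.eta z + F x z P.xi * P.eta y) ∧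
    (∀ x y : V, F x y P.xi = F y x P.xi) ∧
    (∀ x y : V, F x y P.xi = F (P.phi x) (P.phi y) P.xi))
  ∨ -- F₈
  ((∀ x y z : V, F x y z = F x y P.xi * P.eta z + F x z P.xi * P.eta y) ∧
    (∀ x y : V, F x y P.xi = F y x P.xi) ∧
    (∀ x y : V, F x y P.xi = -F (P.phi x) (P.phi y) P.xi))
  ∨ -- F₉
  ((∀ x y z : V, F x y z = F x y P.xi * P.eta z + F x z P.xi * P.eta y) ∧
    (∀ x y : V, F x y P.xi = -F y x P.xi) ∧
    (∀ x y : V, F x y P.xi = -F (P.phi x) (P.phi y) P.xi))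
  ∨ -- F₁₀
  (∀ x y z : V, F x y z = -(P.eta x) * F P.xi (P.phi y) (P.phi z))
  ∨ -- F₁₁
  (∀ x y z : V, F x y z = P.eta x * (P.eta y * omg P F z + P.eta z * omg P F y))


lemma theta_sub'' {V : Type*} [NormedAddCommGroup V] [InnerProductSpace ℝ V]
    (F : Tri V) {m : ℕ} (e : Fin m → V) (a b : V) :
    theta F e (a - b) = theta F e a - theta F e b := by
  simp [theta, Finset.sum_sub_distrib]

lemma theta_smul'' {V : Type*} [NormedAddCommGroup V] [InnerProductSpace ℝ V]
    (F : Tri V) {m : ℕ} (e : Fin m → V) (r : ℝ) (a : V) :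
    theta F e (r • a) = r * theta F e a := by
  simp [theta, Finset.mul_sum]

lemma theta_zero'' {V : Type*} [NormedAddCommGroup V] [InnerProductSpace ℝ V]
    (F : Tri V) {m : ℕ} (e : Fin m → V) : theta F e (0 : V) = 0 := by simp [theta]

/-- each of the nine basic classes F₁, F₂, F₄, F₅, F₆, F₈, F₉, F₁₀, F₁₁
has Nijenhuis tensor vanishing on `(φ·, φ·, ·)`, and consequently so does any finite
sum of fundamental tensors from these classes. -/
theorem nineClass_N_phi_phi_zero
    [FiniteDimensional ℝ V] (n : ℕ) (hn : 1 ≤ n)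
    (hdim : Module.finrank ℝ V = 2 * n + 1)
    (P : PiStruct V)
    (e : Fin (2 * n) → V) (he : Orthonormal ℝ e)
    (heker : ∀ i, ⟪e i, P.xi⟫ = (0 : ℝ))
    (hespan : ∀ x : V, ⟪x, P.xi⟫ = (0 : ℝ) → x ∈ Submodule.span ℝ (Set.range e)) :
    (∀ F : Tri V, IsFund P F → NineClass P F e n →
      ∀ x y z : V, Nij P F (P.phi x) (P.phi y) z = 0) ∧
    (∀ (k : ℕ) (Fs : Fin k → Tri V),
      (∀ j, IsFund P (Fs j) ∧ NineClass P (Fs j) e n) →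
      ∀ x y z : V, Nij P (∑ j, Fs j) (P.phi x) (P.phi y) z = 0) := by
  have main : ∀ F : Tri V, IsFund P F → NineClass P F e n →
      ∀ x y z : V, Nij P F (P.phi x) (P.phi y) z = 0 := by
    intro F hF hN x y z
    obtain ⟨hA, hfun⟩ := hF
    have hyx : ⟪y, P.phi x⟫ = ⟪x, P.phi y⟫ := by rw [real_inner_comm, P.g_phi_symm]
    have hzx : ⟪z, P.phi x⟫ = ⟪x, P.phi z⟫ := by rw [real_inner_comm, P.g_phi_symm]
    have hzy : ⟪z, P.phi y⟫ = ⟪y, P.phi z⟫ := by rw [real_inner_comm, P.g_phi_symm]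
    have hyx2 : ⟪y, x⟫ = ⟪x, y⟫ := real_inner_comm x y
    have hzx2 : ⟪z, x⟫ = ⟪x, z⟫ := real_inner_comm x z
    have hzy2 : ⟪z, y⟫ = ⟪y, z⟫ := real_inner_comm y z
    have hxic : ∀ w : V, ⟪P.xi, w⟫ = ⟪w, P.xi⟫ := fun w => real_inner_comm w P.xi
    rcases hN with h1 | ⟨hxi1, hxi2, hth, hcyc⟩ | h4 | h5 | ⟨hd, hs, hp⟩ | ⟨hd, hs, hp⟩ |
      ⟨hd, hs, hp⟩ | h10 | h11
    · -- F₁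
      simp only [Nij, h1]
      simp only [PiStruct.eta, P.phi_phi, P.phi_xi, P.eta_phi, P.eta_xi, P.g_phi_phi,
        P.g_phi_symm, map_sub, map_smul, map_zero, inner_sub_left, inner_sub_right,
        real_inner_smul_left, real_inner_smul_right, inner_zero_left, inner_zero_right,
        zero_smul, sub_zero, smul_eq_mul, mul_zero, zero_mul, mul_one, one_mul, sub_self,
        add_zero, zero_add, theta_sub'', theta_smul'', theta_zero'',
        hyx, hzx, hzy, hyx2, hzx2, hzy2, hxic]
      ring
    · -- F₂
      have L1 : ∀ a b : V, F a b P.xi = 0 := by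
        intro a b; rw [hA]; exact hxi2 a b
      have L2 : ∀ a b c : V, F a (P.phi b) (P.phi c) = -F a b c := by
        intro a b c
        have h := hfun a b c
        rw [hxi2 a c, L1 a b] at h
        linarith [h]
      have L3 : ∀ a b c : V, F a b (P.phi c) = -F a c (P.phi b) := by
        intro a b c
        have e1 : F a (P.phi c) (P.phi (P.phi b)) =
            F a (P.phi c) b - ⟪b, P.xi⟫ * F a (P.phi c) P.xi := by
          rw [P.phi_phi b]; simp
        rw [L1] at e1
        have e2 : F a (P.phi (P.phi b)) (P.phi c) = -F a (P.phi b) c := L2 a (P.phi b) c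
        have e3 : F a (P.phi c) (P.phi (P.phi b)) = F a (P.phi (P.phi b)) (P.phi c) := hA _ _ _
        have e4 : F a b (P.phi c) = F a (P.phi c) b := hA _ _ _
        have e5 : F a c (P.phi b) = F a (P.phi b) c := hA _ _ _
        linarith [e1, e2, e3, e4, e5]
      have hD1 : -F (P.phi x) y z + F (P.phi y) x z + F z y (P.phi x) = 0 := by
        have h := hcyc (P.phi x) (P.phi y) z
        have e1 : F (P.phi x) (P.phi y) (P.phi z) = -F (P.phi x) y z := L2 _ _ _
        have e2 : F (P.phi y) z (P.phi (P.phi x)) =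
            F (P.phi y) z x - ⟪x, P.xi⟫ * F (P.phi y) z P.xi := by
          rw [P.phi_phi x]; simp
        rw [L1] at e2
        have e3 : F z (P.phi x) (P.phi (P.phi y)) =
            F z (P.phi x) y - ⟪y, P.xi⟫ * F z (P.phi x) P.xi := by
          rw [P.phi_phi y]; simp
        rw [L1] at e3
        have e4 : F (P.phi y) z x = F (P.phi y) x z := hA _ _ _
        have e5 : F z (P.phi x) y = F z y (P.phi x) := hA _ _ _
        linarith [h, e1, e2, e3, e4, e5]
      have hA1 : F x y (P.phi z) - F y x (P.phi z) - F z y (P.phi x) = 0 := by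
        have h := hcyc x y z
        have e1 : F y z (P.phi x) = -F y x (P.phi z) := L3 _ _ _
        have e2 : F z x (P.phi y) = -F z y (P.phi x) := L3 _ _ _
        linarith [h, e1, e2]
      unfold Nij
      have n1 : F (P.phi (P.phi x)) (P.phi y) z = F x (P.phi y) z := by
        rw [P.phi_phi x]; simp [hxi1]
      have n2 : F (P.phi (P.phi y)) (P.phi x) z = F y (P.phi x) z := by
        rw [P.phi_phi y]; simp [hxi1]
      have n3 : F (P.phi x) (P.phi y) (P.phi z) = -F (P.phi x) y z := L2 _ _ _
      have n4 : F (P.phi y) (P.phi x) (P.phi z) = -F (P.phi y) x z := L2 _ _ _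
      have n5 : F x (P.phi y) z = -F x y (P.phi z) := by
        rw [hA x (P.phi y) z]; exact L3 x z y
      have n6 : F y (P.phi x) z = -F y x (P.phi z) := by
        rw [hA y (P.phi x) z]; exact L3 y z x
      rw [n1, n2, n3, n4, L1, L1, n5, n6]
      ring_nf
      linarith [hD1, hA1]
    · -- F₄
      simp only [Nij, h4]
      simp only [PiStruct.eta, P.phi_phi, P.phi_xi, P.eta_phi, P.eta_xi, P.g_phi_phi,
        P.g_phi_symm, map_sub, map_smul, map_zero, inner_sub_left, inner_sub_right,
        real_inner_smul_left, real_inner_smul_right, inner_zero_left, inner_zero_right,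
        zero_smul, sub_zero, smul_eq_mul, mul_zero, zero_mul, mul_one, one_mul, sub_self,
        add_zero, zero_add, hyx, hzx, hzy, hyx2, hzx2, hzy2, hxic]
    · -- F₅
      simp only [Nij, h5]
      simp only [PiStruct.eta, P.phi_phi, P.phi_xi, P.eta_phi, P.eta_xi, P.g_phi_phi,
        P.g_phi_symm, map_sub, map_smul, map_zero, inner_sub_left, inner_sub_right,
        real_inner_smul_left, real_inner_smul_right, inner_zero_left, inner_zero_right,
        zero_smul, sub_zero, smul_eq_mul, mul_zero, zero_mul, mul_one, one_mul, sub_self,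
        add_zero, zero_add, hyx, hzx, hzy, hyx2, hzx2, hzy2, hxic]
      ring
    · -- F₆
      have hGxi1 : ∀ b : V, F P.xi b P.xi = 0 := by
        intro b; rw [hp]; simp [P.phi_xi]
      have hGxi2 : ∀ a : V, F a P.xi P.xi = 0 := by
        intro a; rw [hp]; simp [P.phi_xi]
      unfold Nij
      rw [hd (P.phi (P.phi x)) (P.phi y) z, hd (P.phi (P.phi y)) (P.phi x) z,
          hd (P.phi x) (P.phi y) (P.phi z), hd (P.phi y) (P.phi x) (P.phi z)]
      simp only [PiStruct.eta, P.phi_phi, P.phi_xi, P.eta_phi, P.eta_xi,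
        map_sub, map_smul, map_zero, LinearMap.sub_apply, LinearMap.smul_apply,
        LinearMap.zero_apply, smul_eq_mul, hGxi1, hGxi2,
        mul_zero, zero_mul, mul_one, one_mul, sub_zero, zero_sub, add_zero, zero_add]
      linear_combination (⟪z, P.xi⟫ : ℝ) * (hs x (P.phi y) - hs y (P.phi x))
    · -- F₈
      have hGxi1 : ∀ b : V, F P.xi b P.xi = 0 := by
        intro b; rw [hp]; simp [P.phi_xi]
      have hGxi2 : ∀ a : V, F a P.xi P.xi = 0 := by
        intro a; rw [hp]; simp [P.phi_xi]
      unfold Nij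
      rw [hd (P.phi (P.phi x)) (P.phi y) z, hd (P.phi (P.phi y)) (P.phi x) z,
          hd (P.phi x) (P.phi y) (P.phi z), hd (P.phi y) (P.phi x) (P.phi z)]
      simp only [PiStruct.eta, P.phi_phi, P.phi_xi, P.eta_phi, P.eta_xi,
        map_sub, map_smul, map_zero, LinearMap.sub_apply, LinearMap.smul_apply,
        LinearMap.zero_apply, smul_eq_mul, hGxi1, hGxi2,
        mul_zero, zero_mul, mul_one, one_mul, sub_zero, zero_sub, add_zero, zero_add]
      linear_combination (⟪z, P.xi⟫ : ℝ) * (hs x (P.phi y) - hs y (P.phi x))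
    · -- F₉
      have hGxi1 : ∀ b : V, F P.xi b P.xi = 0 := by
        intro b; rw [hp]; simp [P.phi_xi]
      have hGxi2 : ∀ a : V, F a P.xi P.xi = 0 := by
        intro a; rw [hp]; simp [P.phi_xi]
      have key : ∀ a b : V, F a (P.phi b) P.xi = F b (P.phi a) P.xi := by
        intro a b
        rw [hp a (P.phi b)]
        simp only [P.phi_phi, map_sub, map_smul, LinearMap.sub_apply, LinearMap.smul_apply,
          smul_eq_mul, hGxi2, mul_zero, sub_zero]
        rw [hs (P.phi a) b]; ring
      unfold Nij
      rw [hd (P.phi (P.phi x)) (P.phi y) z, hd (P.phi (P.phi y)) (P.phi x) z,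
          hd (P.phi x) (P.phi y) (P.phi z), hd (P.phi y) (P.phi x) (P.phi z)]
      simp only [PiStruct.eta, P.phi_phi, P.phi_xi, P.eta_phi, P.eta_xi,
        map_sub, map_smul, map_zero, LinearMap.sub_apply, LinearMap.smul_apply,
        LinearMap.zero_apply, smul_eq_mul, hGxi1, hGxi2,
        mul_zero, zero_mul, mul_one, one_mul, sub_zero, zero_sub, add_zero, zero_add]
      linear_combination (⟪z, P.xi⟫ : ℝ) * (2 * key x y + hs y (P.phi x) - hs x (P.phi y))
    · -- F₁₀
      have hz : ∀ a b c : V, ⟪a, P.xi⟫ = (0 : ℝ) → F a b c = 0 := by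
        intro a b c ha; rw [h10]; simp [PiStruct.eta, ha]
      simp [Nij, hz _ _ _ (P.eta_phi _)]
    · -- F₁₁
      have hz : ∀ a b c : V, ⟪a, P.xi⟫ = (0 : ℝ) → F a b c = 0 := by
        intro a b c ha; rw [h11]; simp [PiStruct.eta, ha]
      simp [Nij, hz _ _ _ (P.eta_phi _)]
  refine ⟨main, ?_⟩
  intro k Fs h x y z
  have hlin : Nij P (∑ j, Fs j) (P.phi x) (P.phi y) z
      = ∑ j, Nij P (Fs j) (P.phi x) (P.phi y) z := by
    simp only [Nij, LinearMap.sum_apply, Finset.sum_sub_distrib, Finset.mul_sum,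
      Finset.sum_add_distrib, Finset.sum_apply, mul_sub]
  rw [hlin]
  exact Finset.sum_eq_zero fun j _ => main (Fs j) (h j).1 (h j).2 x y z
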